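/- Fix ε₁ > 0. Let x ≥ y ≥ log x ≥ 2, suppose y is large enough and 1/2 + ε₁ ≤ α_G(x,y) ≤ 1 - 4/log y. Then there is a constant c₀ > 0 such that for all real t with |t| ≤ 1/log y, writing s = α_G + it, one has |H(s,G;y) / H(α_G,G;y)| ≤ exp( -(c₀ y / log y) · log( 1 + t² φ₂(α_G,G;y) / (y/log y) ) ). -/

import Mathlib

open Real Finset
open scoped Classical

/-- `r(n)`: the number of representations of `n` as a sum of two squares of integers,
where different signs and different orders of the summands are counted as different. -/
noncomputable def rG (n : ℕ) : ℕ := Set.ncard {q : ℤ × ℤ | q.1 ^ 2 + q.2 ^ 2 = (n : ℤ)}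

/-- `χ₄`, the unique primitive Dirichlet character modulo 4, as a real-valued function. -/
noncomputable def chi4 (n : ℕ) : ℝ := ((ZMod.χ₄ (n : ZMod 4) : ℤ) : ℝ)

/-- The finite set of primes `p ≤ y`. -/
noncomputable def primesUpTo (y : ℝ) : Finset ℕ := (Finset.range (⌊y⌋₊ + 1)).filter Nat.Prime

/-- `H(σ, G; y) = ∏_{p ≤ y} (1 - p^{-σ})⁻¹ (1 - χ₄(p) p^{-σ})⁻¹` for real `σ`. -/
noncomputable def HG (σ y : ℝ) : ℝ :=
  ∏ p ∈ primesUpTo y, ((1 - (p : ℝ) ^ (-σ))⁻¹ * (1 - chi4 p * (p : ℝ) ^ (-σ))⁻¹)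

/-- `φ(σ, G; y) = log H(σ, G; y)`. -/
noncomputable def phiG (σ y : ℝ) : ℝ := Real.log (HG σ y)

/-- `φ_k(σ, G; y)`, the `k`-th partial derivative of `φ(σ, G; y)` with respect to `σ`. -/
noncomputable def phiGk (k : ℕ) (σ y : ℝ) : ℝ := iteratedDeriv k (fun s => phiG s y) σ

/-- `Ψ_G(x, y) = Σ_{n ≤ x, P(n) ≤ y} r(n)`: the sum of `r(n)` over `y`-smooth `n ≤ x`. -/
noncomputable def PsiG (x y : ℝ) : ℝ :=
  ∑ n ∈ Finset.Icc 1 ⌊x⌋₊, if ∀ p ∈ n.primeFactors, (p : ℝ) ≤ y then (rG n : ℝ) else 0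

/-- `H(s, G; y)` for complex `s`. -/
noncomputable def HGc (s : ℂ) (y : ℝ) : ℂ :=
  ∏ p ∈ primesUpTo y, ((1 - (p : ℂ) ^ (-s))⁻¹ * (1 - (chi4 p : ℂ) * (p : ℂ) ^ (-s))⁻¹)

section Aux
lemma chi4_tri (n : ℕ) : chi4 n = 0 ∨ chi4 n = 1 ∨ chi4 n = -1 := by
  unfold chi4
  rcases ZMod.isQuadratic_χ₄ (n : ZMod 4) with h | h | h <;> rw [h] <;> norm_num


-- sin² lower bound for |θ| ≤ 1
lemma sinsq_ge {θ : ℝ} (h : θ^2 ≤ 1) : θ^2/4 ≤ (Real.sin θ)^2 := by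
  have habs : |θ| ≤ 1 := abs_le.2 ⟨by nlinarith [sq_nonneg (θ+1)], by nlinarith [sq_nonneg (θ-1)]⟩
  have h2 : (Real.sin |θ|)^2 = (Real.sin θ)^2 := by
    rcases abs_cases θ with ⟨h1, _⟩ | ⟨h1, _⟩ <;> rw [h1] <;> simp [Real.sin_neg]
  rw [← h2]
  rcases eq_or_lt_of_le (abs_nonneg θ) with h0 | h0
  · have : θ = 0 := by simpa using h0.symm
    simp [this]
  · have := Real.sin_gt_sub_cube h0
    have h3 : (3/4) * |θ| ≤ |θ| - |θ|^3/4 := by nlinarith [abs_nonneg θ, sq_abs θ]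
    have h4 : (3/4) * |θ| ≤ Real.sin |θ| := by linarith [pow_nonneg (abs_nonneg θ) 3]
    have := sq_abs θ
    nlinarith [abs_nonneg θ]

-- 1 - cos bound for θ² ≤ 4
lemma one_sub_cos_ge {θ : ℝ} (h : θ^2 ≤ 4) : θ^2/8 ≤ 1 - Real.cos θ := by
  have hh : (θ/2)^2 ≤ 1 := by nlinarith
  have := sinsq_ge hh
  have hs : (Real.sin (θ/2))^2 = 1/2 - Real.cos θ / 2 := by
    have := Real.sin_sq_eq_half_sub (θ/2)
    rw [this]; ring_nf
  nlinarith

-- exp small bound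
lemma exp_small {q : ℝ} (h0 : 0 ≤ q) (h1 : q ≤ 28) : Real.exp (q/32) ≤ 1 + q/4 := by
  have h2 : Real.exp (-(q/32)) ≥ 1 - q/32 := by
    have := Real.add_one_le_exp (-(q/32)); linarith
  have h3 : (0:ℝ) < 1 - q/32 := by linarith
  have h4 : Real.exp (q/32) * (1 - q/32) ≤ 1 := by
    calc Real.exp (q/32) * (1 - q/32) ≤ Real.exp (q/32) * Real.exp (-(q/32)) := by
          nlinarith [Real.exp_pos (q/32)]
      _ = 1 := by rw [← Real.exp_add]; simp
  nlinarith [Real.exp_pos (q/32)]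

lemma key1 {w θ : ℝ} (hw0 : 0 ≤ w) (hw : w^2 ≤ 1/2) (hθ : θ^2 ≤ 1) :
    (1-w)^2 * Real.exp (θ^2*w/(1-w)^2 / 32) ≤ 1 - 2*w*Real.cos θ + w^2 := by
  have hw1 : w ≤ 3/4 := by nlinarith
  have hd : (0:ℝ) < (1-w)^2 := by nlinarith
  set q := θ^2*w/(1-w)^2 with hq
  have hq0 : 0 ≤ q := by positivity
  have hq28 : q ≤ 28 := by
    rw [hq, div_le_iff₀ hd]; nlinarith [sq_nonneg θ]
  have he : Real.exp (q/32) ≤ 1 + q/4 := exp_small hq0 hq28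
  have hcos := one_sub_cos_ge (by nlinarith : θ^2 ≤ 4)
  have hkey : (1-w)^2 * (1 + q/4) ≤ 1 - 2*w*Real.cos θ + w^2 := by
    have hqd : (1-w)^2 * q = θ^2*w := by rw [hq]; field_simp [(show (1:ℝ) - w ≠ 0 by nlinarith)]
    nlinarith
  calc (1-w)^2 * Real.exp (q/32) ≤ (1-w)^2 * (1+q/4) := by nlinarith [Real.exp_pos (q/32)]
    _ ≤ _ := hkey

lemma key2 {w θ : ℝ} (hw0 : 0 ≤ w) (hw : w^2 ≤ 1/2) (hθ : θ^2 ≤ 1) :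
    (1-w^2)^2 * Real.exp (4*θ^2*w^2/(1-w^2)^2 / 32) ≤
      (1 - 2*w*Real.cos θ + w^2) * (1 + 2*w*Real.cos θ + w^2) := by
  have hd : (0:ℝ) < (1-w^2)^2 := by nlinarith
  set q := 4*θ^2*w^2/(1-w^2)^2 with hq
  have hq0 : 0 ≤ q := by positivity
  have hq28 : q ≤ 28 := by
    rw [hq, div_le_iff₀ hd]; nlinarith [sq_nonneg θ, sq_nonneg w]
  have he : Real.exp (q/32) ≤ 1 + q/4 := exp_small hq0 hq28
  have hsin := sinsq_ge hθ
  have hprod : (1 - 2*w*Real.cos θ + w^2) * (1 + 2*w*Real.cos θ + w^2)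
      = (1-w^2)^2 + 4*w^2*(Real.sin θ)^2 := by
    have := Real.sin_sq_add_cos_sq θ; nlinarith
  have hqd : (1-w^2)^2 * q = 4*θ^2*w^2 := by rw [hq]; field_simp [(show (1:ℝ) - w^2 ≠ 0 by nlinarith)]
  calc (1-w^2)^2 * Real.exp (q/32) ≤ (1-w^2)^2 * (1+q/4) := by nlinarith [Real.exp_pos (q/32)]
    _ ≤ _ := by rw [hprod]; nlinarith

lemma znormSq (p : ℕ) (hp : 0 < p) (α t c : ℝ) :
    Complex.normSq (1 - (c:ℂ) * (p:ℂ)^(-((α:ℂ)+(t:ℂ)*Complex.I))) =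
      1 - 2*c*((p:ℝ)^(-α))*Real.cos (t*Real.log p) + c^2*((p:ℝ)^(-α))^2 := by
  have hp0 : (p:ℂ) ≠ 0 := by exact_mod_cast Nat.cast_ne_zero.2 hp.ne'
  have hlog : Complex.log (p:ℂ) = (Real.log p : ℂ) := by
    rw [← Complex.ofReal_natCast, ← Complex.ofReal_log (by positivity)]
  rw [Complex.cpow_def_of_ne_zero hp0, hlog]
  set L := Real.log p with hL
  set E := Complex.exp ((L:ℂ) * -((α:ℂ)+(t:ℂ)*Complex.I)) with hE
  have hre : ((L:ℂ) * -((α:ℂ)+(t:ℂ)*Complex.I)).re = -(L*α) := by simp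
  have him : ((L:ℂ) * -((α:ℂ)+(t:ℂ)*Complex.I)).im = -(L*t) := by simp
  have hEre : E.re = Real.exp (-(L*α)) * Real.cos (t*L) := by
    rw [hE, Complex.exp_re, hre, him, Real.cos_neg, mul_comm t L]
  have hEim : E.im = -(Real.exp (-(L*α)) * Real.sin (t*L)) := by
    rw [hE, Complex.exp_im, hre, him, Real.sin_neg, mul_comm t L]; ring
  have hw : (p:ℝ)^(-α) = Real.exp (-(L*α)) := by
    rw [Real.rpow_def_of_pos (by positivity), hL]; ring_nf
  have hsc := Real.sin_sq_add_cos_sq (t*L)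
  rw [Complex.normSq_apply]
  simp only [Complex.sub_re, Complex.sub_im, Complex.mul_re, Complex.mul_im,
    Complex.one_re, Complex.one_im, Complex.ofReal_re, Complex.ofReal_im,
    hEre, hEim, hw]
  linear_combination (c^2 * Real.exp (-(L*α))^2) * Real.sin_sq_add_cos_sq (t*L)

lemma chi4_abs_le (n : ℕ) : |chi4 n| ≤ 1 := by
  rcases chi4_tri n with h | h | h <;> rw [h] <;> norm_num

noncomputable def gterm (p : ℕ) (σ : ℝ) : ℝ :=
  -Real.log (1 - 1*(p:ℝ)^(-σ)) + -Real.log (1 - chi4 p * (p:ℝ)^(-σ))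

noncomputable def g1term (p : ℕ) (σ : ℝ) : ℝ :=
  -(1 * Real.log p * (p:ℝ)^(-σ) / (1 - 1*(p:ℝ)^(-σ))) +
  -(chi4 p * Real.log p * (p:ℝ)^(-σ) / (1 - chi4 p * (p:ℝ)^(-σ)))

noncomputable def vterm (p : ℕ) (σ : ℝ) : ℝ :=
  1 * (Real.log p)^2 * (p:ℝ)^(-σ) / (1 - 1*(p:ℝ)^(-σ))^2 +
  chi4 p * (Real.log p)^2 * (p:ℝ)^(-σ) / (1 - chi4 p * (p:ℝ)^(-σ))^2

-- basic facts
lemma W_pos {p : ℕ} (hp : (1:ℝ) < p) (σ : ℝ) : 0 < (p:ℝ)^(-σ) :=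
  Real.rpow_pos_of_pos (by linarith) _

lemma W_lt_one {p : ℕ} (hp : (1:ℝ) < p) {σ : ℝ} (hσ : 0 < σ) : (p:ℝ)^(-σ) < 1 :=
  Real.rpow_lt_one_of_one_lt_of_neg hp (by linarith)

lemma fac_pos {p : ℕ} (hp : (1:ℝ) < p) {σ : ℝ} (hσ : 0 < σ) {c : ℝ} (hc : |c| ≤ 1) :
    0 < 1 - c * (p:ℝ)^(-σ) := by
  have h1 := W_pos hp σ
  have h2 := W_lt_one hp hσ
  have : c * (p:ℝ)^(-σ) < 1 := by
    calc c * (p:ℝ)^(-σ) ≤ |c| * (p:ℝ)^(-σ) := by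
          nlinarith [le_abs_self c]
      _ ≤ 1 * (p:ℝ)^(-σ) := by nlinarith
      _ < 1 := by linarith
  linarith

lemma hasDerivAt_W {p : ℕ} (hp : (1:ℝ) < p) (σ : ℝ) :
    HasDerivAt (fun x : ℝ => (p:ℝ)^(-x)) (-(Real.log p * (p:ℝ)^(-σ))) σ := by
  have h : ∀ x : ℝ, (p:ℝ)^(-x) = Real.exp (Real.log p * -x) := fun x =>
    Real.rpow_def_of_pos (by linarith) _
  have hd := ((hasDerivAt_id σ).neg.const_mul (Real.log p)).exp
  simp only [Pi.neg_apply, id] at hd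
  have heq : (fun x : ℝ => (p:ℝ)^(-x)) = fun x => Real.exp (Real.log p * -x) := funext h
  rw [heq]
  convert hd using 1
  rw [h σ]; ring

lemma hasDerivAt_neglog {p : ℕ} (hp : (1:ℝ) < p) (c : ℝ) (hc : |c| ≤ 1) {σ : ℝ} (hσ : 0 < σ) :
    HasDerivAt (fun x : ℝ => -Real.log (1 - c * (p:ℝ)^(-x)))
      (-(c * Real.log p * (p:ℝ)^(-σ) / (1 - c * (p:ℝ)^(-σ)))) σ := by
  have hfac := fac_pos hp hσ hc
  have hin : HasDerivAt (fun x : ℝ => 1 - c * (p:ℝ)^(-x))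
      (c * (Real.log p * (p:ℝ)^(-σ))) σ := by
    have := ((hasDerivAt_W hp σ).const_mul c).const_sub 1
    exact this.congr_deriv (by ring)
  have := (hin.log hfac.ne').neg
  exact this.congr_deriv (by ring)

lemma hasDerivAt_negfrac {p : ℕ} (hp : (1:ℝ) < p) (c : ℝ) (hc : |c| ≤ 1) {σ : ℝ} (hσ : 0 < σ) :
    HasDerivAt (fun x : ℝ => -(c * Real.log p * (p:ℝ)^(-x) / (1 - c * (p:ℝ)^(-x))))
      (c * (Real.log p)^2 * (p:ℝ)^(-σ) / (1 - c * (p:ℝ)^(-σ))^2) σ := by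
  have hfac := fac_pos hp hσ hc
  have hW := hasDerivAt_W hp σ
  have hin : HasDerivAt (fun x : ℝ => 1 - c * (p:ℝ)^(-x))
      (c * (Real.log p * (p:ℝ)^(-σ))) σ := by
    have := ((hasDerivAt_W hp σ).const_mul c).const_sub 1
    exact this.congr_deriv (by ring)
  have hdiv := hW.div hin hfac.ne'
  have := (hdiv.const_mul (c * Real.log p)).neg
  refine (this.congr_deriv (g' := c * (Real.log p)^2 * (p:ℝ)^(-σ) / (1 - c * (p:ℝ)^(-σ))^2) ?_).congr_of_eventuallyEq
    (Filter.Eventually.of_forall fun x => by simp only [Pi.neg_apply, Pi.div_apply]; ring)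
  exact (by
    rw [eq_div_iff (pow_ne_zero 2 hfac.ne'), neg_mul, mul_assoc, div_mul_cancel₀ _ (pow_ne_zero 2 hfac.ne')]; ring)

lemma mem_primesUpTo {p : ℕ} {y : ℝ} (h : p ∈ primesUpTo y) : p.Prime ∧ (p:ℝ) ≤ y := by
  rw [primesUpTo, Finset.mem_filter, Finset.mem_range] at h
  obtain ⟨hr, hp⟩ := h
  refine ⟨hp, ?_⟩
  have hle : p ≤ ⌊y⌋₊ := Nat.lt_succ_iff.1 hr
  by_cases hy : 0 ≤ y
  · exact_mod_cast (Nat.le_floor_iff hy).1 hle |>.trans (le_refl y)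
  · exfalso
    push_neg at hy
    have h2 := hp.two_le
    have h0 : ⌊y⌋₊ = 0 := Nat.floor_eq_zero.2 (by linarith)
    omega

lemma prime_one_lt {p : ℕ} (hp : p.Prime) : (1:ℝ) < p := by exact_mod_cast hp.one_lt

lemma phiG_eq {σ y : ℝ} (hσ : 0 < σ) : phiG σ y = ∑ p ∈ primesUpTo y, gterm p σ := by
  rw [phiG, HG, Real.log_prod]
  · refine Finset.sum_congr rfl fun p hp => ?_
    have hp1 := prime_one_lt (mem_primesUpTo hp).1
    have h1 : 0 < 1 - (p:ℝ)^(-σ) := by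
      have := fac_pos hp1 hσ (c := 1) (by norm_num); linarith [this]
    have h2 : 0 < 1 - chi4 p * (p:ℝ)^(-σ) := fac_pos hp1 hσ (chi4_abs_le p)
    rw [Real.log_mul (by positivity) (by positivity), Real.log_inv, Real.log_inv, gterm]
    rw [one_mul]
  · intro p hp
    have hp1 := prime_one_lt (mem_primesUpTo hp).1
    have h1 : 0 < 1 - (p:ℝ)^(-σ) := by
      have := fac_pos hp1 hσ (c := 1) (by norm_num); linarith [this]
    have h2 : 0 < 1 - chi4 p * (p:ℝ)^(-σ) := fac_pos hp1 hσ (chi4_abs_le p)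
    positivity

lemma hasDerivAt_sum1 {y σ : ℝ} (hσ : 0 < σ) :
    HasDerivAt (fun x => ∑ p ∈ primesUpTo y, gterm p x) (∑ p ∈ primesUpTo y, g1term p σ) σ := by
  refine HasDerivAt.fun_sum fun p hp => ?_
  have hp1 := prime_one_lt (mem_primesUpTo hp).1
  exact (hasDerivAt_neglog hp1 1 (by norm_num) hσ).add
    (hasDerivAt_neglog hp1 (chi4 p) (chi4_abs_le p) hσ)

lemma hasDerivAt_sum2 {y σ : ℝ} (hσ : 0 < σ) :
    HasDerivAt (fun x => ∑ p ∈ primesUpTo y, g1term p x) (∑ p ∈ primesUpTo y, vterm p σ) σ := by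
  refine HasDerivAt.fun_sum fun p hp => ?_
  have hp1 := prime_one_lt (mem_primesUpTo hp).1
  exact (hasDerivAt_negfrac hp1 1 (by norm_num) hσ).add
    (hasDerivAt_negfrac hp1 (chi4 p) (chi4_abs_le p) hσ)

lemma phiGk2_eq {α y : ℝ} (hα : 0 < α) :
    phiGk 2 α y = ∑ p ∈ primesUpTo y, vterm p α := by
  have hev : (fun s => phiG s y) =ᶠ[nhds α] fun x => ∑ p ∈ primesUpTo y, gterm p x :=
    Filter.eventuallyEq_of_mem (Ioi_mem_nhds hα) (fun σ hσ => phiG_eq hσ)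
  have hd1 : ∀ σ ∈ Set.Ioi (0:ℝ), deriv (fun s => phiG s y) σ = ∑ p ∈ primesUpTo y, g1term p σ := by
    intro σ hσ
    have hev' : (fun s => phiG s y) =ᶠ[nhds σ] fun x => ∑ p ∈ primesUpTo y, gterm p x :=
      Filter.eventuallyEq_of_mem (Ioi_mem_nhds hσ) (fun τ hτ => phiG_eq hτ)
    rw [hev'.deriv_eq, (hasDerivAt_sum1 hσ).deriv]
  have hev2 : deriv (fun s => phiG s y) =ᶠ[nhds α] fun σ => ∑ p ∈ primesUpTo y, g1term p σ :=
    Filter.eventuallyEq_of_mem (Ioi_mem_nhds hα) hd1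
  rw [phiGk]
  rw [iteratedDeriv_succ, iteratedDeriv_one]
  rw [hev2.deriv_eq, (hasDerivAt_sum2 hα).deriv]

lemma sqle {P Q : ℝ} (hP : 0 ≤ P) (hQ : 0 ≤ Q) (h : P^2 ≤ Q^2) : P ≤ Q := by nlinarith

lemma wsq_le {p : ℕ} (hp2 : (2:ℝ) ≤ p) {α : ℝ} (hα : 1/2 ≤ α) : ((p:ℝ)^(-α))^2 ≤ 1/2 := by
  have h1 : ((p:ℝ)^(-α))^2 = (p:ℝ)^(-α*2) := by
    rw [← Real.rpow_natCast ((p:ℝ)^(-α)) 2, ← Real.rpow_mul (by linarith)]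
    norm_num
  rw [h1]
  have h2 : (p:ℝ)^(-α*2) ≤ (p:ℝ)^(-1:ℝ) :=
    Real.rpow_le_rpow_of_exponent_le (by linarith) (by linarith)
  have h3 : (p:ℝ)^(-1:ℝ) = ((p:ℝ))⁻¹ := Real.rpow_neg_one _
  have h4 : ((p:ℝ))⁻¹ ≤ 1/2 := by
    rw [inv_le_comm₀ (by linarith) (by norm_num)]; linarith
  linarith [h2, h3 ▸ h2]


lemma expsq (a : ℝ) : Real.exp a ^ 2 = Real.exp (2*a) := by
  rw [two_mul, Real.exp_add, sq]

lemma perprime (p : ℕ) (hp : p.Prime) (α t : ℝ) (hα : 1/2 ≤ α)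
    (hθ : (t * Real.log p)^2 ≤ 1) :
    ‖(1 - (p:ℂ)^(-((α:ℂ) + (t:ℂ)*Complex.I)))⁻¹ *
        (1 - (chi4 p : ℂ) * (p:ℂ)^(-((α:ℂ) + (t:ℂ)*Complex.I)))⁻¹‖ ≤
      ((1 - (p:ℝ)^(-α))⁻¹ * (1 - chi4 p * (p:ℝ)^(-α))⁻¹) *
        Real.exp (-(t^2 * vterm p α) / 64) := by
  have hp1 : (1:ℝ) < p := by exact_mod_cast hp.one_lt
  have hp2 : (2:ℝ) ≤ p := by exact_mod_cast hp.two_le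
  have hα0 : 0 < α := by linarith
  set z := (p:ℂ)^(-((α:ℂ) + (t:ℂ)*Complex.I)) with hz
  set w := (p:ℝ)^(-α) with hw
  set θ := t * Real.log p with hθdef
  set L := Real.log p with hL
  have hw0 : 0 < w := W_pos hp1 α
  have hw1 : w < 1 := W_lt_one hp1 hα0
  have hwsq : w^2 ≤ 1/2 := wsq_le hp2 hα
  have h1wpos : (0:ℝ) < 1 - w := by linarith
  have hN : Complex.normSq (1 - z) = 1 - 2*w*Real.cos θ + w^2 := by
    have := znormSq p hp.pos α t 1
    rw [← hz, ← hw, ← hθdef] at this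
    rw [Complex.ofReal_one, one_mul] at this
    rw [this]; ring
  have habs : ∀ A : ℂ, (‖A‖)^2 = Complex.normSq A := fun A => Complex.sq_norm A
  rcases chi4_tri p with hc | hc | hc
  · -- c = 0
    rw [hc]
    have hv : t^2 * vterm p α = θ^2*w/(1-w)^2 := by
      rw [vterm, hc, ← hw, ← hL, hθdef]
      field_simp
      ring
    rw [hv]
    simp only [Complex.ofReal_zero, zero_mul, mul_zero, sub_zero, inv_one, mul_one]
    rw [norm_inv]
    have hkey := key1 hw0.le hwsq hθ
    have hQ : (1-w) * Real.exp (θ^2*w/(1-w)^2/64) ≤ ‖1 - z‖ := by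
      apply sqle (by positivity) (norm_nonneg _)
      rw [habs, hN]
      have h2a : 2*(θ^2*w/(1-w)^2/64) = θ^2*w/(1-w)^2/32 := by ring
      calc ((1-w) * Real.exp (θ^2*w/(1-w)^2/64))^2
          = (1-w)^2 * Real.exp (θ^2*w/(1-w)^2/32) := by rw [mul_pow, expsq, h2a]
        _ ≤ _ := hkey
    have hPpos : (0:ℝ) < (1-w) * Real.exp (θ^2*w/(1-w)^2/64) :=
      mul_pos h1wpos (Real.exp_pos _)
    calc (‖1-z‖)⁻¹ ≤ ((1-w) * Real.exp (θ^2*w/(1-w)^2/64))⁻¹ :=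
          inv_anti₀ hPpos hQ
      _ = (1-w)⁻¹ * Real.exp (-(θ^2*w/(1-w)^2)/64) := by
          rw [mul_inv, ← Real.exp_neg]; ring_nf
  · -- c = 1
    rw [hc]
    have hv : t^2 * vterm p α = 2*(θ^2*w/(1-w)^2) := by
      rw [vterm, hc, ← hw, ← hL, hθdef]
      field_simp
      ring
    rw [hv]
    simp only [Complex.ofReal_one, one_mul]
    rw [norm_mul, norm_inv]
    have hkey := key1 hw0.le hwsq hθ
    have hQ : (1-w) * Real.exp (θ^2*w/(1-w)^2/64) ≤ ‖1 - z‖ := by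
      apply sqle (by positivity) (norm_nonneg _)
      rw [habs, hN]
      have h2a : 2*(θ^2*w/(1-w)^2/64) = θ^2*w/(1-w)^2/32 := by ring
      calc ((1-w) * Real.exp (θ^2*w/(1-w)^2/64))^2
          = (1-w)^2 * Real.exp (θ^2*w/(1-w)^2/32) := by rw [mul_pow, expsq, h2a]
        _ ≤ _ := hkey
    have hPpos : (0:ℝ) < (1-w) * Real.exp (θ^2*w/(1-w)^2/64) :=
      mul_pos h1wpos (Real.exp_pos _)
    have h1 : (‖1-z‖)⁻¹ ≤ ((1-w) * Real.exp (θ^2*w/(1-w)^2/64))⁻¹ :=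
      inv_anti₀ hPpos hQ
    have hsplit : Real.exp (-(2*(θ^2*w/(1-w)^2))/64)
        = Real.exp (-(θ^2*w/(1-w)^2/64)) * Real.exp (-(θ^2*w/(1-w)^2/64)) := by
      rw [← Real.exp_add]; congr 1; ring
    calc (‖1-z‖)⁻¹ * (‖1-z‖)⁻¹
        ≤ ((1-w) * Real.exp (θ^2*w/(1-w)^2/64))⁻¹ * ((1-w) * Real.exp (θ^2*w/(1-w)^2/64))⁻¹ :=
          mul_le_mul h1 h1 (by positivity) (by positivity)
      _ = (1-w)⁻¹ * (1-w)⁻¹ * Real.exp (-(2*(θ^2*w/(1-w)^2))/64) := by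
          rw [mul_inv, hsplit, ← Real.exp_neg]; ring
      _ = _ := by ring
  · -- c = -1
    rw [hc]
    have h1w : (0:ℝ) < 1 - w^2 := by nlinarith
    have h1wp : (0:ℝ) < 1 + w := by linarith
    have hv : t^2 * vterm p α = 4*θ^2*w^2/(1-w^2)^2 := by
      rw [vterm, hc, ← hw, ← hL, hθdef]
      have e1 : (1:ℝ) - 1*w ≠ 0 := by nlinarith
      have e2 : (1:ℝ) - (-1)*w ≠ 0 := by nlinarith
      have e3 : (1:ℝ) - w^2 ≠ 0 := h1w.ne'
      have e4 : (1:ℝ) + w ≠ 0 := h1wp.ne'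
      have e5 : (1:ℝ) + w * 2 + w ^ 2 ≠ 0 := by positivity
      rw [div_add_div _ _ (pow_ne_zero 2 e1) (pow_ne_zero 2 e2), mul_div_assoc',
        div_eq_div_iff (mul_ne_zero (pow_ne_zero 2 e1) (pow_ne_zero 2 e2)) (pow_ne_zero 2 e3)]
      ring
    rw [hv]
    have hM : Complex.normSq (1 - (((-1:ℝ)):ℂ) * z) = 1 + 2*w*Real.cos θ + w^2 := by
      have := znormSq p hp.pos α t (-1)
      rw [← hz, ← hw, ← hθdef] at this
      rw [this]; ring
    rw [norm_mul, norm_inv, norm_inv]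
    have hkey := key2 hw0.le hwsq hθ
    have hQ : (1-w)*(1+w) * Real.exp (4*θ^2*w^2/(1-w^2)^2/64) ≤
        ‖1 - z‖ * ‖1 - (((-1:ℝ)):ℂ) * z‖ := by
      apply sqle (le_of_lt (by positivity : (0:ℝ) < (1-w)*(1+w) * Real.exp (4*θ^2*w^2/(1-w^2)^2/64)))
        (mul_nonneg (norm_nonneg _) (norm_nonneg _))
      have h2a : 2*(4*θ^2*w^2/(1-w^2)^2/64) = 4*θ^2*w^2/(1-w^2)^2/32 := by ring
      calc ((1-w)*(1+w) * Real.exp (4*θ^2*w^2/(1-w^2)^2/64))^2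
          = (1-w^2)^2 * Real.exp (4*θ^2*w^2/(1-w^2)^2/32) := by
            rw [mul_pow, mul_pow, expsq, h2a]; ring
        _ ≤ (1 - 2*w*Real.cos θ + w^2) * (1 + 2*w*Real.cos θ + w^2) := hkey
        _ = _ := by rw [mul_pow, habs, habs, hN, hM]
    have hPpos : (0:ℝ) < (1-w)*(1+w) * Real.exp (4*θ^2*w^2/(1-w^2)^2/64) := by positivity
    have hfin : (‖1-z‖ * ‖1 - (((-1:ℝ)):ℂ) * z‖)⁻¹ ≤
        ((1-w)*(1+w) * Real.exp (4*θ^2*w^2/(1-w^2)^2/64))⁻¹ := inv_anti₀ hPpos hQ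
    have h1pw : (1 : ℝ) - (-1)*w = 1 + w := by ring
    calc (‖1-z‖)⁻¹ * (‖1 - (((-1:ℝ)):ℂ) * z‖)⁻¹
        = (‖1-z‖ * ‖1 - (((-1:ℝ)):ℂ) * z‖)⁻¹ := by rw [mul_inv]
      _ ≤ ((1-w)*(1+w) * Real.exp (4*θ^2*w^2/(1-w^2)^2/64))⁻¹ := hfin
      _ = (1-w)⁻¹ * (1 - (-1)*w)⁻¹ * Real.exp (-(4*θ^2*w^2/(1-w^2)^2)/64) := by
          rw [h1pw, mul_inv, mul_inv, ← Real.exp_neg]; ring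

lemma vterm_nonneg {p : ℕ} (hp : p.Prime) {α : ℝ} (hα : 0 < α) : 0 ≤ vterm p α := by
  have hp1 := prime_one_lt hp
  have hw0 : 0 < (p:ℝ)^(-α) := W_pos hp1 α
  have hw1 : (p:ℝ)^(-α) < 1 := W_lt_one hp1 hα
  set w := (p:ℝ)^(-α)
  rcases chi4_tri p with hc | hc | hc <;> rw [vterm, hc]
  · positivity
  · positivity
  · have h1 : (0:ℝ) < (1 - 1*w)^2 := by nlinarith
    have h2 : (0:ℝ) < (1 - (-1)*w)^2 := by nlinarith
    rw [div_add_div _ _ (ne_of_gt h1) (ne_of_gt h2)]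
    apply div_nonneg _ (by positivity)
    nlinarith [sq_nonneg (Real.log p * w)]

lemma HG_fac_pos {p : ℕ} (hp : p.Prime) {σ : ℝ} (hσ : 0 < σ) :
    0 < (1 - (p : ℝ) ^ (-σ))⁻¹ * (1 - chi4 p * (p : ℝ) ^ (-σ))⁻¹ := by
  have hp1 := prime_one_lt hp
  have h1 : 0 < 1 - (p:ℝ)^(-σ) := by
    have := fac_pos hp1 hσ (c := 1) (by norm_num); linarith [this]
  have h2 : 0 < 1 - chi4 p * (p:ℝ)^(-σ) := fac_pos hp1 hσ (chi4_abs_le p)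
  positivity

lemma HG_pos {σ y : ℝ} (hσ : 0 < σ) : 0 < HG σ y := by
  rw [HG]
  exact Finset.prod_pos fun p hp => HG_fac_pos (mem_primesUpTo hp).1 hσ

lemma HGc_real (α y : ℝ) : HGc (α : ℂ) y = ((HG α y : ℝ) : ℂ) := by
  rw [HGc, HG, Complex.ofReal_prod]
  refine Finset.prod_congr rfl fun p hp => ?_
  have hcp : (((p:ℝ)^(-α) : ℝ) : ℂ) = (p:ℂ)^(-(α:ℂ)) := by
    rw [Complex.ofReal_cpow (by positivity : (0:ℝ) ≤ (p:ℝ))]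
    norm_cast
  push_cast [hcp]
  rfl


end Aux
/-- bound for `|H(s,G;y)/H(α_G,G;y)|` for small `t`. -/
theorem stmt17 (ε₁ : ℝ) (hε₁ : 0 < ε₁) :
    ∃ c₀ > (0:ℝ), ∃ y₀ : ℝ, ∀ x y : ℝ, 2 ≤ Real.log x → Real.log x ≤ y → y ≤ x → y₀ ≤ y →
      ∀ α : ℝ, 0 < α → Real.log x + phiGk 1 α y = 0 →
        1 / 2 + ε₁ ≤ α → α ≤ 1 - 4 / Real.log y →
        ∀ t : ℝ, |t| ≤ 1 / Real.log y →
          ‖HGc (α + t * Complex.I) y / HGc (α : ℂ) y‖ ≤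
            Real.exp (-(c₀ * y / Real.log y) *
              Real.log (1 + t ^ 2 * phiGk 2 α y / (y / Real.log y))) := by
  refine ⟨1/64, by norm_num, 2, fun x y hlx hxy hyx hy0 α hα0 hsad hαl hαh t ht => ?_⟩
  have hy2 : (2:ℝ) ≤ y := le_trans hlx hxy
  have hlogy : 0 < Real.log y := Real.log_pos (by linarith)
  have hα12 : 1/2 ≤ α := by linarith
  set S := ∑ p ∈ primesUpTo y, vterm p α with hSdef
  have hphi2 : phiGk 2 α y = S := phiGk2_eq hα0
  have hS0 : 0 ≤ S :=
    Finset.sum_nonneg fun p hp => vterm_nonneg (mem_primesUpTo hp).1 hα0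
  have hA : 0 < HG α y := HG_pos hα0
  -- numerator bound
  have hnum : ‖HGc (↑α + ↑t * Complex.I) y‖ ≤
      HG α y * Real.exp (-(t^2 * S)/64) := by
    rw [HGc, norm_prod]
    have hle : ∀ p ∈ primesUpTo y,
        ‖(1 - (p:ℂ)^(-((α:ℂ) + (t:ℂ)*Complex.I)))⁻¹ *
          (1 - (chi4 p : ℂ) * (p:ℂ)^(-((α:ℂ) + (t:ℂ)*Complex.I)))⁻¹‖ ≤
        ((1 - (p:ℝ)^(-α))⁻¹ * (1 - chi4 p * (p:ℝ)^(-α))⁻¹) *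
          Real.exp (-(t^2 * vterm p α)/64) := by
      intro p hp
      obtain ⟨hpp, hpy⟩ := mem_primesUpTo hp
      have hp1 := prime_one_lt hpp
      have hlp : 0 ≤ Real.log p := Real.log_nonneg (by linarith)
      have hlple : Real.log p ≤ Real.log y := Real.log_le_log (by linarith) hpy
      have hθ : (t * Real.log p)^2 ≤ 1 := by
        have h1 : |t| * Real.log p ≤ (1/Real.log y) * Real.log y := by
          apply mul_le_mul ht hlple hlp (by positivity)
        rw [one_div_mul_cancel hlogy.ne'] at h1
        have h2 : |t * Real.log p| = |t| * Real.log p := by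
          rw [abs_mul, abs_of_nonneg hlp]
        nlinarith [abs_nonneg (t * Real.log p), sq_abs (t * Real.log p)]
      exact perprime p hpp α t hα12 hθ
    calc ∏ p ∈ primesUpTo y, ‖_‖ ≤
        ∏ p ∈ primesUpTo y, (((1 - (p:ℝ)^(-α))⁻¹ * (1 - chi4 p * (p:ℝ)^(-α))⁻¹) *
          Real.exp (-(t^2 * vterm p α)/64)) :=
          Finset.prod_le_prod (fun p _ => norm_nonneg _) hle
      _ = HG α y * Real.exp (-(t^2 * S)/64) := by
          rw [Finset.prod_mul_distrib, ← Real.exp_sum, HG]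
          congr 1
          congr 1
          rw [hSdef, Finset.mul_sum, neg_div, ← Finset.sum_div, ← neg_div,
            Finset.sum_div, ← Finset.sum_neg_distrib, ← Finset.sum_div]
  -- put together
  have hden : HGc (α : ℂ) y = ((HG α y : ℝ) : ℂ) := HGc_real α y
  have hdiv : ‖HGc (↑α + ↑t * Complex.I) y / HGc (α : ℂ) y‖ ≤
      Real.exp (-(t^2 * S)/64) := by
    rw [norm_div, hden, Complex.norm_of_nonneg hA.le, div_le_iff₀ hA]
    calc ‖HGc (↑α + ↑t * Complex.I) y‖ ≤ HG α y * Real.exp (-(t^2*S)/64) := hnum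
      _ = Real.exp (-(t^2*S)/64) * HG α y := by ring
  refine hdiv.trans (Real.exp_le_exp.2 ?_)
  rw [hphi2]
  set Y := y / Real.log y with hYdef
  have hY : 0 < Y := by positivity
  have hcoef : (1:ℝ)/64 * y / Real.log y = Y/64 := by rw [hYdef]; ring
  rw [hcoef]
  set a := t^2 * S with hadef
  have ha0 : 0 ≤ a := mul_nonneg (sq_nonneg t) hS0
  have hlog : Real.log (1 + a/Y) ≤ a/Y := by
    have := Real.log_le_sub_one_of_pos (show (0:ℝ) < 1 + a/Y by nlinarith [div_nonneg ha0 hY.le])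
    linarith
  have : Y * Real.log (1 + a/Y) ≤ a := by
    calc Y * Real.log (1 + a/Y) ≤ Y * (a/Y) := by
          apply mul_le_mul_of_nonneg_left hlog hY.le
      _ = a := by field_simp
  have hlognn : 0 ≤ Real.log (1 + a/Y) := Real.log_nonneg (by nlinarith [div_nonneg ha0 hY.le])
  nlinarith
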